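/- For every g ∈ SL(2,ℝ), every convex function f : (0,∞) → ℝ with f(1) = 0, and all real 2×2 symmetric positive-definite matrices θ, θ′, the f-divergence between Poincaré distributions is invariant under the SL(2,ℝ) action: D_f[p_θ : p_{θ′}] = D_f[p_{g⁻ᵀθg⁻¹} : p_{g⁻ᵀθ′g⁻¹}]. -/

import Mathlib

open MeasureTheory Matrix

/-- The Poincaré density on the upper half-plane, as a density on `ℝ × ℝ`
(vanishing for `y ≤ 0`), indexed by a 2×2 symmetric positive-definite matrix. -/
noncomputable def poincareDensity (θ : Matrix (Fin 2) (Fin 2) ℝ) (z : ℝ × ℝ) : ℝ :=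
  if 0 < z.2 then
    Real.sqrt θ.det * Real.exp (2 * Real.sqrt θ.det) / Real.pi *
      Real.exp (-(θ 0 0 * (z.1 ^ 2 + z.2 ^ 2) + 2 * θ 0 1 * z.1 + θ 1 1) / z.2) / z.2 ^ 2
  else 0

/-- The `f`-divergence between two densities on the upper half-plane. -/
noncomputable def fDivH (f : ℝ → ℝ) (p q : ℝ × ℝ → ℝ) : ℝ :=
  ∫ z in {w : ℝ × ℝ | 0 < w.2}, p z * f (q z / p z)

section Aux

open Complex

/-- The Möbius action of a real 2×2 matrix (given by its entries) on `ℂ`. -/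
noncomputable def moebC (p q r s : ℝ) (z : ℂ) : ℂ := ((p:ℂ)*z+q)/((r:ℂ)*z+s)

lemma moeb_denom_ne {p q r s : ℝ} (h1 : p*s - q*r = 1) {z : ℂ} (hz : 0 < z.im) :
    (r:ℂ)*z+s ≠ 0 := by
  intro h
  have him : r * z.im = 0 := by
    have := congrArg Complex.im h
    simpa using this
  have hr : r = 0 := by
    rcases mul_eq_zero.1 him with h' | h'
    · exact h'
    · exact absurd h' hz.ne'
  have hre : s = 0 := by
    have := congrArg Complex.re h
    simpa [hr] using this
  rw [hr, hre] at h1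
  norm_num at h1

lemma moebC_im {p q r s : ℝ} (h1 : p*s - q*r = 1) {z : ℂ} (hz : 0 < z.im) :
    (moebC p q r s z).im = z.im / normSq ((r:ℂ)*z+s) := by
  have hd := moeb_denom_ne h1 hz
  have hN : normSq ((r:ℂ)*z+s) ≠ 0 := by simpa using hd
  rw [moebC, Complex.div_im]
  rw [div_sub_div_same, div_eq_div_iff hN hN]
  simp only [Complex.add_im, Complex.add_re, Complex.mul_im, Complex.mul_re,
    Complex.ofReal_re, Complex.ofReal_im]
  linear_combination (z.im * Complex.normSq ((r:ℂ)*z+s)) * h1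

lemma moebC_mem {p q r s : ℝ} (h1 : p*s - q*r = 1) {z : ℂ} (hz : 0 < z.im) :
    0 < (moebC p q r s z).im := by
  rw [moebC_im h1 hz]
  exact div_pos hz (normSq_pos.2 (moeb_denom_ne h1 hz))

lemma moebC_id (z : ℂ) : moebC 1 0 0 1 z = z := by simp [moebC]

lemma moebC_comp {p q r s p' q' r' s' : ℝ} (h1 : p*s - q*r = 1) (h1' : p'*s' - q'*r' = 1)
    {z : ℂ} (hz : 0 < z.im) :
    moebC p q r s (moebC p' q' r' s' z)
      = moebC (p*p'+q*r') (p*q'+q*s') (r*p'+s*r') (r*q'+s*s') z := by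
  have hd' : (r':ℂ)*z+s' ≠ 0 := moeb_denom_ne h1' hz
  have hw : 0 < (moebC p' q' r' s' z).im := moebC_mem h1' hz
  have hd : (r:ℂ)*(moebC p' q' r' s' z)+s ≠ 0 := moeb_denom_ne h1 hw
  have hdc : ((r*p'+s*r' : ℝ):ℂ)*z+((r*q'+s*s' : ℝ):ℂ) ≠ 0 := by
    have : ((r*p'+s*r' : ℝ):ℂ)*z+((r*q'+s*s' : ℝ):ℂ)
        = ((r:ℂ)*(moebC p' q' r' s' z)+s) * ((r':ℂ)*z+s') := by
      rw [moebC]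
      push_cast
      field_simp
      ring
    rw [this]
    exact mul_ne_zero hd hd'
  rw [moebC, moebC, moebC]
  rw [div_eq_div_iff (by rw [moebC] at hd; exact hd) (by push_cast at hdc ⊢; exact hdc)]
  have hd'' : z*(r':ℂ)+s' ≠ 0 := by rw [mul_comm]; exact hd'
  push_cast
  field_simp
  ring

lemma moebC_inv_left {p q r s : ℝ} (h1 : p*s - q*r = 1) {z : ℂ} (hz : 0 < z.im) :
    moebC s (-q) (-r) p (moebC p q r s z) = z := by
  have h1' : s*p - (-q)*(-r) = 1 := by linear_combination h1
  rw [moebC_comp h1' h1 hz]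
  have e1 : s*p + -q*r = 1 := by linear_combination h1
  have e2 : s*q + -q*s = 0 := by ring
  have e3 : -r*p + p*r = 0 := by ring
  have e4 : -r*q + p*s = 1 := by linear_combination h1
  rw [e1, e2, e3, e4, moebC_id]

lemma moebC_inv_right {p q r s : ℝ} (h1 : p*s - q*r = 1) {z : ℂ} (hz : 0 < z.im) :
    moebC p q r s (moebC s (-q) (-r) p z) = z := by
  have h1' : s*p - (-q)*(-r) = 1 := by linear_combination h1
  rw [moebC_comp h1 h1' hz]
  have e1 : p*s + q*(-r) = 1 := by linear_combination h1
  have e2 : p*(-q) + q*p = 0 := by ring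
  have e3 : r*s + s*(-r) = 0 := by ring
  have e4 : r*(-q) + s*p = 1 := by linear_combination h1
  rw [e1, e2, e3, e4, moebC_id]

lemma moebC_injOn {p q r s : ℝ} (h1 : p*s - q*r = 1) :
    Set.InjOn (moebC p q r s) {z : ℂ | 0 < z.im} := by
  intro z hz z' hz' h
  have := congrArg (moebC s (-q) (-r) p) h
  rwa [moebC_inv_left h1 hz, moebC_inv_left h1 hz'] at this

lemma moebC_image {p q r s : ℝ} (h1 : p*s - q*r = 1) :
    moebC p q r s '' {z : ℂ | 0 < z.im} = {z : ℂ | 0 < z.im} := by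
  have h1' : s*p - (-q)*(-r) = 1 := by linear_combination h1
  ext w
  constructor
  · rintro ⟨z, hz, rfl⟩
    exact moebC_mem h1 hz
  · intro hw
    exact ⟨moebC s (-q) (-r) p w, moebC_mem h1' hw, moebC_inv_right h1 hw⟩

lemma hasDerivAt_moebC {p q r s : ℝ} (h1 : p*s - q*r = 1) {z : ℂ} (hz : 0 < z.im) :
    HasDerivAt (moebC p q r s) ((((r:ℂ)*z+s)^2)⁻¹) z := by
  have hd := moeb_denom_ne h1 hz
  have h1c : (p:ℂ)*s - q*r = 1 := by exact_mod_cast h1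
  have H1 : HasDerivAt (fun z : ℂ => (p:ℂ)*z+q) ((p:ℂ)*1) z :=
    ((hasDerivAt_id z).const_mul _).add_const _
  have H2 : HasDerivAt (fun z : ℂ => (r:ℂ)*z+s) ((r:ℂ)*1) z :=
    ((hasDerivAt_id z).const_mul _).add_const _
  have := H1.div H2 hd
  refine HasDerivAt.congr_deriv this ?_
  have hnum : (p:ℂ)*1*((r:ℂ)*z+s) - ((p:ℂ)*z+q)*((r:ℂ)*1) = 1 := by
    linear_combination h1c
  rw [hnum, inv_eq_one_div]

lemma det_restrictScalars_mul (c : ℂ) :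
    ContinuousLinearMap.det
      (ContinuousLinearMap.restrictScalars ℝ ((1 : ℂ →L[ℂ] ℂ).smulRight c)) = normSq c := by
  have h : (ContinuousLinearMap.restrictScalars ℝ ((1 : ℂ →L[ℂ] ℂ).smulRight c)).toLinearMap
      = Algebra.lmul ℝ ℂ c := by
    apply LinearMap.ext
    intro z
    simp [mul_comm]
  rw [ContinuousLinearMap.det, h, ← Algebra.norm_apply, Algebra.norm_complex_apply]

lemma poincareDensity_moebC (p q r s : ℝ) (h1 : p*s - q*r = 1)
    (θ : Matrix (Fin 2) (Fin 2) ℝ) (hsym : θ 1 0 = θ 0 1) (z : ℂ) (hz : 0 < z.im) :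
    poincareDensity ((!![s,-q;-r,p] : Matrix (Fin 2) (Fin 2) ℝ)ᵀ * θ * !![s,-q;-r,p])
        ((moebC p q r s z).re, (moebC p q r s z).im)
      = (normSq ((r:ℂ)*z+s))^2 * poincareDensity θ (z.re, z.im) := by
  have hd := moeb_denom_ne h1 hz
  have hNpos0 : 0 < normSq ((r:ℂ)*z+s) := normSq_pos.2 hd
  set x := z.re with hx
  set y := z.im with hy
  have hN : normSq ((r:ℂ)*z+s) = (r*x+s)^2 + (r*y)^2 := by
    simp [Complex.normSq_apply]
    ring
  have hNpos : 0 < (r*x+s)^2 + (r*y)^2 := hN ▸ hNpos0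
  have hN0 : (r*x+s)^2 + (r*y)^2 ≠ 0 := ne_of_gt hNpos
  have hy0 : y ≠ 0 := ne_of_gt hz
  have him : (moebC p q r s z).im = y / ((r*x+s)^2 + (r*y)^2) := by
    rw [moebC_im h1 hz, hN]
  have hre : (moebC p q r s z).re
      = ((p*x+q)*(r*x+s) + (p*y)*(r*y)) / ((r*x+s)^2 + (r*y)^2) := by
    rw [moebC, Complex.div_re, ← add_div, hN]
    congr 1
    simp [Complex.add_re, Complex.add_im, Complex.mul_re, Complex.mul_im]
    rfl
  set A := (!![s,-q;-r,p] : Matrix (Fin 2) (Fin 2) ℝ) with hA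
  have hAT : Aᵀ = !![s,-r;-q,p] := by
    ext i j; fin_cases i <;> fin_cases j <;> simp [hA]
  have e00 : (Aᵀ*θ*A) 0 0 = θ 0 0*s^2 - 2*θ 0 1*r*s + θ 1 1*r^2 := by
    rw [hAT, hA]
    simp [Matrix.mul_apply, Fin.sum_univ_two, Matrix.vecMul, dotProduct]
    linear_combination (-(r*s))*hsym
  have e01 : (Aᵀ*θ*A) 0 1 = -(θ 0 0)*q*s + θ 0 1*(p*s+q*r) - θ 1 1*p*r := by
    rw [hAT, hA]
    simp [Matrix.mul_apply, Fin.sum_univ_two, Matrix.vecMul, dotProduct]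
    linear_combination (q*r)*hsym
  have e11 : (Aᵀ*θ*A) 1 1 = θ 0 0*q^2 - 2*θ 0 1*p*q + θ 1 1*p^2 := by
    rw [hAT, hA]
    simp [Matrix.mul_apply, Fin.sum_univ_two, Matrix.vecMul, dotProduct]
    linear_combination (-(p*q))*hsym
  have hdet : (Aᵀ*θ*A).det = θ.det := by
    have hAdet : A.det = 1 := by
      rw [hA, Matrix.det_fin_two_of]
      linear_combination h1
    rw [Matrix.det_mul, Matrix.det_mul, Matrix.det_transpose, hAdet]
    ring
  simp only [poincareDensity]
  rw [if_pos (by rw [him]; exact div_pos hz hNpos), if_pos hz, hdet, e00, e01, e11, him, hre]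
  set N := (r*x+s)^2 + (r*y)^2 with hNdef
  set U := (p*x+q)^2+(p*y)^2 with hU
  set V := (p*x+q)*(r*x+s)+(p*y)*(r*y) with hV
  have hVy : V^2 + y^2 = U*N := by
    rw [hU, hV, hNdef]
    linear_combination (-(y^2)*(p*s-q*r+1))*h1
  have hXY : (V/N)^2 + (y/N)^2 = U/N := by
    rw [div_pow, div_pow, ← add_div, hVy, pow_two]
    field_simp
  have hG : (θ 0 0*s^2 - 2*θ 0 1*r*s + θ 1 1*r^2)*U
      + 2*(-(θ 0 0)*q*s + θ 0 1*(p*s+q*r) - θ 1 1*p*r)*V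
      + (θ 0 0*q^2 - 2*θ 0 1*p*q + θ 1 1*p^2)*N
      = θ 0 0*(x^2+y^2)+2*θ 0 1*x+θ 1 1 := by
    rw [hU, hV, hNdef]
    linear_combination ((θ 0 0*(x^2+y^2)+2*θ 0 1*x+θ 1 1)*(p*s-q*r+1)) * h1
  have hE : ((θ 0 0*s^2 - 2*θ 0 1*r*s + θ 1 1*r^2)*((V/N)^2+(y/N)^2)
      + 2*(-(θ 0 0)*q*s + θ 0 1*(p*s+q*r) - θ 1 1*p*r)*(V/N)
      + (θ 0 0*q^2 - 2*θ 0 1*p*q + θ 1 1*p^2)) / (y/N)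
      = (θ 0 0*(x^2+y^2)+2*θ 0 1*x+θ 1 1)/y := by
    rw [hXY, ← hG]
    field_simp
  rw [neg_div, neg_div, hE, hN, div_pow]
  field_simp

lemma setIntegral_upperHalf (G : ℝ × ℝ → ℝ) :
    ∫ w in {w : ℝ × ℝ | 0 < w.2}, G w = ∫ z in {z : ℂ | 0 < z.im}, G (z.re, z.im) := by
  exact (Complex.volume_preserving_equiv_real_prod.setIntegral_preimage_emb
    Complex.measurableEquivRealProd.measurableEmbedding G {w | 0 < w.2}).symm

end Aux

/-- every `f`-divergence between Poincaré distributions is invariant under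
the `SL(2,ℝ)`-action `θ ↦ g⁻ᵀθg⁻¹` on the parameter space. -/
theorem fDiv_poincare_invariant (g : Matrix (Fin 2) (Fin 2) ℝ) (hg : g.det = 1)
    (f : ℝ → ℝ) (hf : ConvexOn ℝ (Set.Ioi 0) f) (hf1 : f 1 = 0)
    (θ θ' : Matrix (Fin 2) (Fin 2) ℝ) (hθ : θ.PosDef) (hθ' : θ'.PosDef) :
    fDivH f (poincareDensity θ) (poincareDensity θ') =
      fDivH f (poincareDensity ((g⁻¹)ᵀ * θ * g⁻¹)) (poincareDensity ((g⁻¹)ᵀ * θ' * g⁻¹)) := by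
  classical
  have hsymθ : θ 1 0 = θ 0 1 := by
    have h := congrFun (congrFun hθ.1 0) 1
    simpa [Matrix.conjTranspose_apply] using h
  have hsymθ' : θ' 1 0 = θ' 0 1 := by
    have h := congrFun (congrFun hθ'.1 0) 1
    simpa [Matrix.conjTranspose_apply] using h
  have h1 : g 0 0 * g 1 1 - g 0 1 * g 1 0 = 1 := by
    rw [← Matrix.det_fin_two g]; exact hg
  have hginv : g⁻¹ = !![g 1 1, -(g 0 1); -(g 1 0), g 0 0] := by
    rw [Matrix.inv_def, hg, Matrix.adjugate_fin_two]
    simp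
  rw [hginv]
  set p := g 0 0
  set q := g 0 1
  set r := g 1 0
  set s := g 1 1
  simp only [fDivH]
  rw [setIntegral_upperHalf, setIntegral_upperHalf]
  have hmeas : MeasurableSet {z : ℂ | 0 < z.im} :=
    measurableSet_lt measurable_const Complex.measurable_im
  set B : ℂ → (ℂ →L[ℝ] ℂ) := fun z =>
    ContinuousLinearMap.restrictScalars ℝ
      ((1 : ℂ →L[ℂ] ℂ).smulRight ((((r:ℂ)*z+s)^2)⁻¹)) with hB
  have hder : ∀ z ∈ {z : ℂ | 0 < z.im},
      HasFDerivWithinAt (moebC p q r s) (B z) {z : ℂ | 0 < z.im} z := by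
    intro z hz
    exact (((hasDerivAt_moebC h1 hz).hasFDerivAt).restrictScalars ℝ).hasFDerivWithinAt
  have hCoV := integral_image_eq_integral_abs_det_fderiv_smul volume hmeas hder
    (moebC_injOn h1)
    (fun z : ℂ =>
      poincareDensity (!![s,-q;-r,p]ᵀ * θ * !![s,-q;-r,p]) (z.re, z.im) *
        f (poincareDensity (!![s,-q;-r,p]ᵀ * θ' * !![s,-q;-r,p]) (z.re, z.im) /
           poincareDensity (!![s,-q;-r,p]ᵀ * θ * !![s,-q;-r,p]) (z.re, z.im)))
  rw [moebC_image h1] at hCoV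
  rw [hCoV]
  apply setIntegral_congr_fun hmeas
  intro z hz
  have hz' : 0 < z.im := hz
  have hd := moeb_denom_ne h1 hz'
  have hNpos : 0 < Complex.normSq ((r:ℂ)*z+s) := Complex.normSq_pos.2 hd
  have hdet : (B z).det = (Complex.normSq ((r:ℂ)*z+s)^2)⁻¹ := by
    rw [hB, det_restrictScalars_mul, map_inv₀, map_pow]
  have hT := poincareDensity_moebC p q r s h1 θ hsymθ z hz'
  have hT' := poincareDensity_moebC p q r s h1 θ' hsymθ' z hz'
  simp only [hdet]
  rw [hT, hT']
  rw [abs_of_pos (by positivity)]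
  rw [mul_div_mul_left _ _ (by positivity : (Complex.normSq ((r:ℂ)*z+s))^2 ≠ 0)]
  rw [smul_eq_mul]
  field_simp
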